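/- Every n×n natural-number matrix R satisfying conditions (i), (ii) and (iii) is the rank matrix of an involution: there exists an involution σ of {1,…,n} with R = R_σ. -/

import Mathlib

open Matrix

/-- A matrix is strictly upper-triangular. -/
def StrictUpper {n : ℕ} (x : Matrix (Fin n) (Fin n) ℂ) : Prop :=
  ∀ a b : Fin n, b ≤ a → x a b = 0

/-- A matrix is (weakly) upper-triangular. -/
def UpperTri {n : ℕ} (x : Matrix (Fin n) (Fin n) ℂ) : Prop :=
  ∀ a b : Fin n, b < a → x a b = 0

/-- The orbit of a matrix under conjugation by invertible upper-triangular matrices. -/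
def Borbit {n : ℕ} (x : Matrix (Fin n) (Fin n) ℂ) : Set (Matrix (Fin n) (Fin n) ℂ) :=
  {y | ∃ b : Matrix (Fin n) (Fin n) ℂ, IsUnit b ∧ UpperTri b ∧ y = b * x * b⁻¹}

/-- A permutation is an involution. -/
def IsInvol {n : ℕ} (σ : Equiv.Perm (Fin n)) : Prop := σ * σ = 1

/-- The strictly upper-triangular part `N_σ` of the permutation matrix of `σ`. -/
def Nmat {n : ℕ} (σ : Equiv.Perm (Fin n)) : Matrix (Fin n) (Fin n) ℂ :=
  Matrix.of fun a b => if a < b ∧ σ a = b then (1 : ℂ) else 0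

/-- The submatrix `π_{i,j}(x)` on rows and columns `i,…,j` (1-based), for `1 ≤ i ≤ j ≤ n`. -/
def blk {n : ℕ} (x : Matrix (Fin n) (Fin n) ℂ) (i j : ℕ)
    (h1 : 1 ≤ i) (h2 : i ≤ j) (h3 : j ≤ n) :
    Matrix (Fin (j + 1 - i)) (Fin (j + 1 - i)) ℂ :=
  Matrix.of fun a b =>
    x ⟨i - 1 + a.1, by have := a.2; omega⟩ ⟨i - 1 + b.1, by have := b.2; omega⟩

/-- The rank matrix of `N_σ` (1-based indices, 0 outside the range `1 ≤ i < j ≤ n`). -/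
noncomputable def Rfun {n : ℕ} (σ : Equiv.Perm (Fin n)) : ℕ → ℕ → ℕ := fun i j =>
  if h : 1 ≤ i ∧ i < j ∧ j ≤ n then (blk (Nmat σ) i j h.1 h.2.1.le h.2.2).rank
  else 0

/-- The number of two-cycles of an involution. -/
def numCycles {n : ℕ} (σ : Equiv.Perm (Fin n)) : ℕ :=
  (Finset.univ.filter fun a : Fin n => a < σ a).card

/-- Evaluation of a polynomial in the matrix entries at a matrix. -/
noncomputable def evalMat {n : ℕ} (x : Matrix (Fin n) (Fin n) ℂ)
    (f : MvPolynomial (Fin n × Fin n) ℂ) : ℂ :=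
  MvPolynomial.eval (fun p => x p.1 p.2) f

/-- The vanishing ideal of a set of matrices. -/
noncomputable def vanishingIdeal {n : ℕ} (S : Set (Matrix (Fin n) (Fin n) ℂ)) :
    Ideal (MvPolynomial (Fin n × Fin n) ℂ) where
  carrier := {f | ∀ x ∈ S, evalMat x f = 0}
  add_mem' := by
    intro a b ha hb x hx
    simp only [evalMat, map_add] at *
    rw [ha x hx, hb x hx, add_zero]
  zero_mem' := by
    intro x hx
    simp [evalMat]
  smul_mem' := by
    intro c f hf x hx
    simp only [evalMat, smul_eq_mul, _root_.map_mul] at *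
    rw [hf x hx, mul_zero]

/-- The Zariski closure of a set of matrices: the common zero set of its vanishing ideal. -/
noncomputable def zclosure {n : ℕ} (S : Set (Matrix (Fin n) (Fin n) ℂ)) :
    Set (Matrix (Fin n) (Fin n) ℂ) :=
  {x | ∀ f ∈ vanishingIdeal S, evalMat x f = 0}

/-- The space of upper-triangular matrices commuting with a given matrix
(the Lie algebra of the stabilizer of `N` in `B`). -/
noncomputable def commUT {n : ℕ} (N : Matrix (Fin n) (Fin n) ℂ) :
    Submodule ℂ (Matrix (Fin n) (Fin n) ℂ) where
  carrier := {z | UpperTri z ∧ z * N = N * z}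
  add_mem' := by
    rintro a b ⟨ha1, ha2⟩ ⟨hb1, hb2⟩
    refine ⟨fun p q h => ?_, by rw [add_mul, mul_add, ha2, hb2]⟩
    simp [Matrix.add_apply, ha1 p q h, hb1 p q h]
  zero_mem' := ⟨fun p q h => rfl, by simp⟩
  smul_mem' := by
    rintro c a ⟨ha1, ha2⟩
    refine ⟨fun p q h => ?_, by rw [Matrix.smul_mul, Matrix.mul_smul, ha2]⟩
    simp [Matrix.smul_apply, ha1 p q h]


/-- Conditions (i)–(iii) on a (1-based) `n×n` natural-number matrix, entries outside
`{1,…,n}²` being read as `0`. -/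
def RConds (n : ℕ) (R : ℕ → ℕ → ℕ) : Prop :=
  (∀ i j, 1 ≤ i → i ≤ n → 1 ≤ j → j ≤ n → j ≤ i → R i j = 0) ∧
  (∀ i j, 1 ≤ i → i < j → j ≤ n →
    R (i + 1) j ≤ R i j ∧ R i j ≤ R (i + 1) j + 1 ∧
    R i (j - 1) ≤ R i j ∧ R i j ≤ R i (j - 1) + 1) ∧
  (∀ i j, 1 ≤ i → i < j → j ≤ n →
    R i j = R (i + 1) j + 1 → R i j = R i (j - 1) + 1 → R i j = R (i + 1) (j - 1) + 1 →
    ((∀ k, 1 ≤ k → k < j → R i k = R (i + 1) k) ∧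
     (∀ k, j ≤ k → k ≤ n → R i k = R (i + 1) k + 1) ∧
     (∀ k, i < k → k ≤ n → R k j = R k (j - 1)) ∧
     (∀ k, 1 ≤ k → k ≤ i → R k j = R k (j - 1) + 1) ∧
     (∀ k, 1 ≤ k → k ≤ n → R j k = R (j + 1) k ∧ R k i = R k (i - 1))))


section Aux

/-- The "corner" condition identifying the matched pairs of the involution. -/
def CornerP (n : ℕ) (R : ℕ → ℕ → ℕ) (a b : ℕ) : Prop :=
  1 ≤ a ∧ a < b ∧ b ≤ n ∧ R a b = R (a+1) b + 1 ∧ R a b = R a (b-1) + 1 ∧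
    R a b = R (a+1) (b-1) + 1

instance (n : ℕ) (R : ℕ → ℕ → ℕ) (a b : ℕ) : Decidable (CornerP n R a b) := by
  unfold CornerP; infer_instance

variable {n : ℕ} {R : ℕ → ℕ → ℕ}

lemma Rzero (hsupp : ∀ i j, i = 0 ∨ j = 0 ∨ n < i ∨ n < j → R i j = 0)
    (hR : RConds n R) (i j : ℕ) (h : j ≤ i) : R i j = 0 := by
  by_cases h1 : j = 0
  · exact hsupp i j (Or.inr (Or.inl h1))
  by_cases h2 : n < i
  · exact hsupp i j (Or.inr (Or.inr (Or.inl h2)))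
  · exact hR.1 i j (by omega) (by omega) (by omega) (by omega) h

lemma corner_of_ne (hsupp : ∀ i j, i = 0 ∨ j = 0 ∨ n < i ∨ n < j → R i j = 0)
    (hR : RConds n R) (i k : ℕ) (h1 : 1 ≤ i) (h2 : i < k) (h3 : k ≤ n)
    (hprev : R i (k-1) = R (i+1) (k-1)) (hne : R i k = R (i+1) k + 1) :
    CornerP n R i k := by
  have hmain := hR.2.1 i k h1 h2 h3
  have h4 : R (i+1) (k-1) ≤ R (i+1) k := by
    by_cases h5 : i + 1 < k
    · exact (hR.2.1 (i+1) k (by omega) h5 h3).2.2.1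
    · rw [Rzero hsupp hR (i+1) (k-1) (by omega)]; exact Nat.zero_le _
  exact ⟨h1, h2, h3, hne, by omega, by omega⟩

lemma row_no (hsupp : ∀ i j, i = 0 ∨ j = 0 ∨ n < i ∨ n < j → R i j = 0)
    (hR : RConds n R) (i : ℕ) (h1 : 1 ≤ i) (hnc : ∀ b, ¬ CornerP n R i b) :
    ∀ k, R i k = R (i+1) k := by
  intro k
  induction k using Nat.strong_induction_on with
  | _ k ih =>
    by_cases hk : i < k ∧ k ≤ n
    · have hprev : R i (k-1) = R (i+1) (k-1) := ih (k-1) (by omega)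
      have hmain := hR.2.1 i k h1 hk.1 hk.2
      by_contra hne'
      exact hnc k (corner_of_ne hsupp hR i k h1 hk.1 hk.2 hprev (by omega))
    · by_cases hk2 : k ≤ i
      · rw [Rzero hsupp hR i k hk2, Rzero hsupp hR (i+1) k (by omega)]
      · have hk3 : n < k := by omega
        rw [hsupp i k (Or.inr (Or.inr (Or.inr hk3))),
          hsupp (i+1) k (Or.inr (Or.inr (Or.inr hk3)))]

lemma row_corner (hsupp : ∀ i j, i = 0 ∨ j = 0 ∨ n < i ∨ n < j → R i j = 0)
    (hR : RConds n R) (i b : ℕ) (hc : CornerP n R i b) :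
    ∀ k, R i k = R (i+1) k + (if b ≤ k ∧ k ≤ n then 1 else 0) := by
  obtain ⟨h1, h2, h3, e1, e2, e3⟩ := hc
  have h33 := hR.2.2 i b h1 h2 h3 e1 e2 e3
  intro k
  by_cases hk : b ≤ k ∧ k ≤ n
  · rw [if_pos hk]; exact h33.2.1 k hk.1 hk.2
  · rw [if_neg hk, Nat.add_zero]
    by_cases hk2 : k < b
    · by_cases hk3 : 1 ≤ k
      · exact h33.1 k hk3 hk2
      · have hk0 : k = 0 := by omega
        subst hk0
        rw [hsupp i 0 (Or.inr (Or.inl rfl)), hsupp (i+1) 0 (Or.inr (Or.inl rfl))]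
    · have hkn : n < k := by omega
      rw [hsupp i k (Or.inr (Or.inr (Or.inr hkn))),
        hsupp (i+1) k (Or.inr (Or.inr (Or.inr hkn)))]

lemma row_unique (hsupp : ∀ i j, i = 0 ∨ j = 0 ∨ n < i ∨ n < j → R i j = 0)
    (hR : RConds n R) {i b b' : ℕ} (hc : CornerP n R i b) (hc' : CornerP n R i b') :
    b = b' := by
  have h := row_corner hsupp hR i b hc b'
  have h' := row_corner hsupp hR i b' hc' b
  have e := hc'.2.2.2.1
  have e' := hc.2.2.2.1
  have hb' : b' ≤ n := hc'.2.2.1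
  have hb : b ≤ n := hc.2.2.1
  by_cases h1 : b ≤ b'
  · by_cases h2 : b' ≤ b
    · omega
    · rw [if_neg (by omega)] at h'; omega
  · rw [if_neg (by omega)] at h; omega

lemma col_unique (hR : RConds n R) {a a' j : ℕ}
    (hc : CornerP n R a j) (hc' : CornerP n R a' j) : a = a' := by
  have key : ∀ x y : ℕ, CornerP n R x j → CornerP n R y j → x < y → False := by
    intro x y hx hy hxy
    obtain ⟨h1, h2, h3, e1, e2, e3⟩ := hx
    have h33 := hR.2.2 x j h1 h2 h3 e1 e2 e3
    have hy1 := hy.2.1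
    have hy2 := hy.2.2.1
    have heq := h33.2.2.1 y hxy (by omega)
    have := hy.2.2.2.2.1
    omega
  rcases lt_trichotomy a a' with h | h | h
  · exact absurd (key a a' hc hc' h) not_false
  · exact h
  · exact absurd (key a' a hc' hc h) not_false

lemma corner_no_row (hR : RConds n R) {a b : ℕ} (hc : CornerP n R a b) (c : ℕ) :
    ¬ CornerP n R b c := by
  intro hcc
  obtain ⟨h1, h2, h3, e1, e2, e3⟩ := hc
  have h33 := hR.2.2 a b h1 h2 h3 e1 e2 e3
  have hc1 : 1 ≤ c := by have := hcc.2.1; omega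
  have hbc := (h33.2.2.2.2 c hc1 hcc.2.2.1).1
  have := hcc.2.2.2.1
  omega

lemma corner_no_col (hR : RConds n R) {a b : ℕ} (hc : CornerP n R a b) (c : ℕ) :
    ¬ CornerP n R c a := by
  intro hcc
  obtain ⟨h1, h2, h3, e1, e2, e3⟩ := hc
  have h33 := hR.2.2 a b h1 h2 h3 e1 e2 e3
  have hc1 : 1 ≤ c := hcc.1
  have hcn : c ≤ n := by have := hcc.2.1; omega
  have hca := (h33.2.2.2.2 c hc1 hcn).2
  have := hcc.2.2.2.2.1
  omega

/-- Counting function: number of corners in rows `≥ i` and columns `≤ j`. -/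
def cnt (n : ℕ) (R : ℕ → ℕ → ℕ) (i j : ℕ) : ℕ :=
  ∑ a ∈ Finset.Icc i n, ∑ b ∈ Finset.Icc 1 j, (if CornerP n R a b then 1 else 0)

lemma count_eq (hsupp : ∀ i j, i = 0 ∨ j = 0 ∨ n < i ∨ n < j → R i j = 0)
    (hR : RConds n R) :
    ∀ d i j, 1 ≤ i → n + 1 - i ≤ d → j ≤ n → R i j = cnt n R i j := by
  intro d
  induction d with
  | zero =>
    intro i j h1 h2 h3
    have hi : n < i := by omega
    rw [hsupp i j (Or.inr (Or.inr (Or.inl hi))), cnt,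
      Finset.Icc_eq_empty (by omega), Finset.sum_empty]
  | succ d ih =>
    intro i j h1 h2 h3
    by_cases hi : n < i
    · rw [hsupp i j (Or.inr (Or.inr (Or.inl hi))), cnt,
        Finset.Icc_eq_empty (by omega), Finset.sum_empty]
    · push_neg at hi
      have hIoc : Finset.Icc (i+1) n = Finset.Ioc i n := by
        ext x; simp only [Finset.mem_Icc, Finset.mem_Ioc]; omega
      have hsplit : cnt n R i j
          = (∑ b ∈ Finset.Icc 1 j, if CornerP n R i b then 1 else 0) + cnt n R (i+1) j := by
        rw [cnt, cnt, Finset.Icc_eq_cons_Ioc hi, Finset.sum_cons, hIoc]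
      have hrow : R i j = R (i+1) j
          + (∑ b ∈ Finset.Icc 1 j, if CornerP n R i b then 1 else 0) := by
        by_cases hex : ∃ b, CornerP n R i b
        · obtain ⟨b0, hb0⟩ := hex
          have hsum : (∑ b ∈ Finset.Icc 1 j, if CornerP n R i b then 1 else 0)
              = if b0 ∈ Finset.Icc 1 j then 1 else 0 := by
            rw [← Finset.sum_ite_eq' (Finset.Icc 1 j) b0 (fun _ => 1)]
            refine Finset.sum_congr rfl fun b _ => ?_
            by_cases hb : b = b0
            · subst hb; rw [if_pos hb0, if_pos rfl]
            · rw [if_neg (fun hcb => hb (row_unique hsupp hR hcb hb0)), if_neg hb]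
          have hk := row_corner hsupp hR i b0 hb0 j
          rw [hsum]
          have hb01 : 1 ≤ b0 := by have := hb0.1; have := hb0.2.1; omega
          by_cases hbj : b0 ≤ j
          · rw [if_pos (Finset.mem_Icc.mpr ⟨hb01, hbj⟩)]
            rw [if_pos ⟨hbj, h3⟩] at hk
            exact hk
          · rw [if_neg (fun hm => hbj (Finset.mem_Icc.mp hm).2)]
            rw [if_neg (fun hm => hbj hm.1)] at hk
            omega
        · push_neg at hex
          rw [Finset.sum_eq_zero fun b _ => if_neg (hex b), Nat.add_zero]
          exact row_no hsupp hR i h1 hex j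
      have hih := ih (i+1) j (by omega) (by omega) h3
      omega

/-- Rank of a 0-1 partial-permutation matrix equals its number of ones. -/
lemma rank_indicator {m : ℕ} (P : Fin m → Fin m → Prop) [∀ a b, Decidable (P a b)]
    (hrow : ∀ a b b', P a b → P a b' → b = b')
    (hcol : ∀ a a' b, P a b → P a' b → a = a') :
    (Matrix.of fun a b => if P a b then (1:ℂ) else 0).rank
      = (Finset.univ.filter fun p : Fin m × Fin m => P p.1 p.2).card := by
  classical
  set M : Matrix (Fin m) (Fin m) ℂ := Matrix.of fun a b => if P a b then (1:ℂ) else 0 with hM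
  set rows : Finset (Fin m) := Finset.univ.filter (fun a => ∃ b, P a b) with hrows
  have hsingle : ∀ (a : Fin m) (b : Fin m), P a b → Mᵀ b = Pi.single a 1 := by
    intro a b hb
    funext a'
    by_cases h : a' = a
    · subst h
      simp [hM, Matrix.transpose_apply, if_pos hb]
    · have hnp : ¬ P a' b := fun hp => h (hcol a' a b hp hb)
      simp [hM, Matrix.transpose_apply, if_neg hnp, Pi.single_eq_of_ne h]
  have hspan : Submodule.span ℂ (Set.range Mᵀ)
      = Submodule.span ℂ (Set.range fun a : rows => Pi.single (a : Fin m) (1:ℂ)) := by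
    apply le_antisymm
    · rw [Submodule.span_le]
      rintro _ ⟨v, rfl⟩
      by_cases hv : ∃ a, P a v
      · obtain ⟨a, ha⟩ := hv
        rw [hsingle a v ha]
        have hamem : a ∈ rows := by
          rw [hrows]; exact Finset.mem_filter.mpr ⟨Finset.mem_univ _, ⟨v, ha⟩⟩
        exact Submodule.subset_span ⟨⟨a, hamem⟩, rfl⟩
      · push_neg at hv
        have hz : Mᵀ v = 0 := by
          funext a'
          simp [hM, Matrix.transpose_apply, if_neg (hv a')]
        rw [hz]
        exact Submodule.zero_mem _
    · rw [Submodule.span_le]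
      rintro _ ⟨⟨a, hamem⟩, rfl⟩
      obtain ⟨b, hb⟩ : ∃ b, P a b := by
        rw [hrows] at hamem
        exact (Finset.mem_filter.mp hamem).2
      exact Submodule.subset_span ⟨b, hsingle a b hb⟩
  have hli : LinearIndependent ℂ (fun a : rows => (Pi.single (a : Fin m) (1:ℂ) : Fin m → ℂ)) := by
    have h0 := (Pi.basisFun ℂ (Fin m)).linearIndependent
    have h1 := h0.comp (Subtype.val : rows → Fin m) Subtype.val_injective
    have h2 : (⇑(Pi.basisFun ℂ (Fin m)) ∘ (Subtype.val : rows → Fin m))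
        = fun a : rows => Pi.single (a : Fin m) (1:ℂ) := by
      funext a; simp [Function.comp, Pi.basisFun_apply]
    rwa [h2] at h1
  have hrank : M.rank = rows.card := by
    rw [Matrix.rank, Matrix.range_mulVecLin, (show Set.range M.col = Set.range Mᵀ from rfl), hspan, finrank_span_eq_card hli,
      Fintype.card_coe]
  rw [hrank]
  refine (Finset.card_bij (fun (p : Fin m × Fin m) _ => p.1) ?_ ?_ ?_).symm
  · intro p hp
    rw [hrows]
    exact Finset.mem_filter.mpr ⟨Finset.mem_univ _, ⟨p.2, (Finset.mem_filter.mp hp).2⟩⟩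
  · intro p hp q hq h
    have h' : p.1 = q.1 := h
    have hp' := (Finset.mem_filter.mp hp).2
    have hq' := (Finset.mem_filter.mp hq).2
    exact Prod.ext h' (hrow q.1 p.2 q.2 (h' ▸ hp') hq')
  · intro a ha
    rw [hrows] at ha
    obtain ⟨b, hb⟩ := (Finset.mem_filter.mp ha).2
    exact ⟨(a, b), Finset.mem_filter.mpr ⟨Finset.mem_univ _, hb⟩, rfl⟩

end Aux

/-- every matrix satisfying conditions (i)–(iii) is the rank matrix of an
involution. -/
theorem stmt5 (n : ℕ) (hn : 1 ≤ n) (R : ℕ → ℕ → ℕ)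
    (hsupp : ∀ i j, i = 0 ∨ j = 0 ∨ n < i ∨ n < j → R i j = 0)
    (hR : RConds n R) :
    ∃ σ : Equiv.Perm (Fin n), IsInvol σ ∧ ∀ i j, R i j = Rfun σ i j := by
  classical
  set F : Fin n → Fin n := fun x =>
    if h : ∃ b : Fin n, CornerP n R (x.1+1) (b.1+1) then h.choose
    else if h' : ∃ a : Fin n, CornerP n R (a.1+1) (x.1+1) then h'.choose
    else x with hF
  have hF1 : ∀ x y : Fin n, CornerP n R (x.1+1) (y.1+1) → F x = y := by
    intro x y hc
    have hex : ∃ b : Fin n, CornerP n R (x.1+1) (b.1+1) := ⟨y, hc⟩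
    simp only [hF]
    rw [dif_pos hex]
    have hs := hex.choose_spec
    have hv := row_unique hsupp hR hs hc
    exact Fin.ext (by omega)
  have hF2 : ∀ x y : Fin n, CornerP n R (y.1+1) (x.1+1) → F x = y := by
    intro x y hc
    have hno : ¬ ∃ b : Fin n, CornerP n R (x.1+1) (b.1+1) := by
      rintro ⟨b, hb⟩
      exact corner_no_row hR hc (b.1+1) hb
    have hex' : ∃ a : Fin n, CornerP n R (a.1+1) (x.1+1) := ⟨y, hc⟩
    simp only [hF]
    rw [dif_neg hno, dif_pos hex']
    have hs := hex'.choose_spec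
    have hv := col_unique hR hs hc
    exact Fin.ext (by omega)
  have hinv : ∀ x, F (F x) = x := by
    intro x
    by_cases h1 : ∃ b : Fin n, CornerP n R (x.1+1) (b.1+1)
    · obtain ⟨b, hb⟩ := h1
      rw [hF1 x b hb]
      exact hF2 b x hb
    · by_cases h2 : ∃ a : Fin n, CornerP n R (a.1+1) (x.1+1)
      · obtain ⟨a, ha⟩ := h2
        rw [hF2 x a ha]
        exact hF1 a x ha
      · have hx : F x = x := by
          simp only [hF]
          rw [dif_neg h1, dif_neg h2]
        rw [hx, hx]
  refine ⟨⟨F, F, hinv, hinv⟩, ?_, ?_⟩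
  · exact Equiv.ext fun x => by
      simp only [Equiv.Perm.mul_apply, Equiv.Perm.one_apply, Equiv.coe_fn_mk]
      exact hinv x
  · set σ : Equiv.Perm (Fin n) := ⟨F, F, hinv, hinv⟩ with hσ
    have hchar : ∀ a b : Fin n, (a < b ∧ σ a = b) ↔ CornerP n R (a.1+1) (b.1+1) := by
      intro a b
      constructor
      · rintro ⟨hab, he⟩
        have he' : F a = b := he
        by_cases h1 : ∃ b' : Fin n, CornerP n R (a.1+1) (b'.1+1)
        · obtain ⟨b', hb'⟩ := h1
          have := hF1 a b' hb'
          rw [he'] at this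
          subst this
          exact hb'
        · by_cases h2 : ∃ c : Fin n, CornerP n R (c.1+1) (a.1+1)
          · obtain ⟨c, hc⟩ := h2
            have hfc := hF2 a c hc
            rw [he'] at hfc
            subst hfc
            have h3 := hc.2.1
            have h4 : a.1 < b.1 := hab
            omega
          · have hx : F a = a := by
              simp only [hF]
              rw [dif_neg h1, dif_neg h2]
            rw [he'] at hx
            subst hx
            exact absurd hab (lt_irrefl _)
      · intro hc
        refine ⟨?_, hF1 a b hc⟩
        have := hc.2.1
        exact Fin.lt_def.mpr (by omega)
    have hNmat : Nmat σ = Matrix.of fun a b : Fin n =>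
        if CornerP n R (a.1+1) (b.1+1) then (1:ℂ) else 0 := by
      ext a b
      simp only [Nmat, Matrix.of_apply]
      exact if_congr (hchar a b) rfl rfl
    intro i j
    by_cases h : 1 ≤ i ∧ i < j ∧ j ≤ n
    · rw [Rfun, dif_pos h]
      set m := j + 1 - i with hm
      have hblkM : blk (Nmat σ) i j h.1 h.2.1.le h.2.2
          = Matrix.of fun a b : Fin m =>
              if CornerP n R (i + a.1) (i + b.1) then (1:ℂ) else 0 := by
        ext a b
        simp only [blk, Matrix.of_apply, hNmat]
        have e1 : i - 1 + a.1 + 1 = i + a.1 := by omega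
        have e2 : i - 1 + b.1 + 1 = i + b.1 := by omega
        rw [e1, e2]
      rw [hblkM, rank_indicator (fun a b : Fin m => CornerP n R (i + a.1) (i + b.1))
        (fun a b b' hb hb' => Fin.ext (by have := row_unique hsupp hR hb hb'; omega))
        (fun a a' b ha ha' => Fin.ext (by have := col_unique hR ha ha'; omega))]
      have hcnt := count_eq hsupp hR (n+1) i j h.1 (by omega) h.2.2
      rw [hcnt, cnt]
      have trim1 : ∀ a ∈ Finset.Icc i n, a ∉ Finset.Icc i j →
          (∑ b ∈ Finset.Icc 1 j, if CornerP n R a b then 1 else 0) = 0 := by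
        intro a ha hna
        refine Finset.sum_eq_zero fun b hb => if_neg fun hc => ?_
        rw [Finset.mem_Icc] at ha hb
        rw [Finset.mem_Icc] at hna
        have := hc.2.1
        omega
      rw [← Finset.sum_subset (Finset.Icc_subset_Icc_right h.2.2) trim1]
      have trim2 : ∀ a ∈ Finset.Icc i j,
          (∑ b ∈ Finset.Icc 1 j, if CornerP n R a b then 1 else 0)
            = ∑ b ∈ Finset.Icc i j, if CornerP n R a b then 1 else 0 := by
        intro a ha
        rw [Finset.mem_Icc] at ha
        refine (Finset.sum_subset (Finset.Icc_subset_Icc_left h.1) ?_).symm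
        intro b hb hnb
        rw [Finset.mem_Icc] at hb
        rw [Finset.mem_Icc] at hnb
        refine if_neg fun hc => ?_
        have := hc.2.1
        omega
      rw [Finset.sum_congr rfl trim2]
      have reidx : ∀ g : ℕ → ℕ, (∑ a ∈ Finset.Icc i j, g a)
          = ∑ a ∈ Finset.range m, g (i + a) := by
        intro g
        refine Finset.sum_nbij' (fun a => a - i) (fun a => i + a) ?_ ?_ ?_ ?_ ?_
        · intro a ha
          rw [Finset.mem_Icc] at ha
          rw [Finset.mem_range]
          omega
        · intro a ha
          rw [Finset.mem_range] at ha
          rw [Finset.mem_Icc]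
          omega
        · intro a ha
          rw [Finset.mem_Icc] at ha
          omega
        · intro a ha
          rw [Finset.mem_range] at ha
          omega
        · intro a ha
          rw [Finset.mem_Icc] at ha
          congr 1
          omega
      rw [reidx, Finset.sum_congr rfl fun a _ => reidx fun b => _]
      rw [Finset.card_filter]
      rw [← Fin.sum_univ_eq_sum_range (fun a =>
        ∑ b ∈ Finset.range m, if CornerP n R (i + a) (i + b) then 1 else 0) m]
      rw [Fintype.sum_prod_type]
      refine Finset.sum_congr rfl fun a _ => ?_
      exact (Fin.sum_univ_eq_sum_range
        (fun b => if CornerP n R (i + a.1) (i + b) then 1 else 0) m).symm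
    · rw [Rfun, dif_neg h]
      by_cases hi0 : i = 0
      · exact hsupp i j (Or.inl hi0)
      by_cases hjn : n < j
      · exact hsupp i j (Or.inr (Or.inr (Or.inr hjn)))
      · exact Rzero hsupp hR i j (by omega)
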